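/- Let A be an abelian category. Suppose given morphisms u : X ⟶ Y, x : X ⟶ X', u' : X' ⟶ Y', y : Y ⟶ Y', v' : Y' ⟶ Z', y' : Y' ⟶ Y'', z' : Z' ⟶ Z'', v'' : Y'' ⟶ Z'' with u ≫ y = x ≫ u' and v' ≫ z' = y' ≫ v''. Assume: (a) the quadrangle (u, x, y, u') is a weak square; (b) y ≫ v' = 0 and the pair (y, v') is exact at Y'; (c) u' ≫ y' = 0 and the pair (u', y') is exact at Y'; (d) the quadrangle (v', y', z', v'') is a weak square. Then the sequence X ⟶ Y' ⟶ Y'' ⊞ Z' ⟶ Z'', with morphisms x ≫ u', biprod.lift y' v', and biprod.desc v'' (-z'), is exact at Y' and exact at Y'' ⊞ Z'. -/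
import Mathlib


open CategoryTheory CategoryTheory.Limits

/-- A commutative quadrangle `(f, g, h, k)` (with `f ≫ h = g ≫ k`) in an abelian category is a
*weak square* if its diagonal sequence `A ⟶ B ⊞ C ⟶ D`, with first morphism `biprod.lift f g`
and second morphism `biprod.desc h (-k)`, is exact at `B ⊞ C`. -/
def IsWeakSquare {A : Type*} [Category A] [Abelian A] {W X Y Z : A}
    (f : W ⟶ X) (g : W ⟶ Y) (h : X ⟶ Z) (k : Y ⟶ Z) : Prop :=
  ∃ w : biprod.lift f g ≫ biprod.desc h (-k) = 0,
    (ShortComplex.mk (biprod.lift f g) (biprod.desc h (-k)) w).Exact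

/-- Given weak squares `(u, x, y, u')` and `(v', y', z', v'')` together with exactness of
`(y, v')` and `(u', y')` at `Y'`, the sequence
`X ⟶ Y' ⟶ Y'' ⊞ Z' ⟶ Z''` with morphisms `x ≫ u'`, `biprod.lift y' v'` and
`biprod.desc v'' (-z')` is exact at `Y'` and at `Y'' ⊞ Z'`. -/
theorem exact_of_weakSquares {A : Type*} [Category A] [Abelian A]
    {X Y X' Y' Z' Y'' Z'' : A}
    (u : X ⟶ Y) (x : X ⟶ X') (u' : X' ⟶ Y') (y : Y ⟶ Y') (v' : Y' ⟶ Z')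
    (y' : Y' ⟶ Y'') (z' : Z' ⟶ Z'') (v'' : Y'' ⟶ Z'')
    (comm₁ : u ≫ y = x ≫ u') (comm₂ : v' ≫ z' = y' ≫ v'')
    (ha : IsWeakSquare u x y u')
    (hb0 : y ≫ v' = 0) (hb : (ShortComplex.mk y v' hb0).Exact)
    (hc0 : u' ≫ y' = 0) (hc : (ShortComplex.mk u' y' hc0).Exact)
    (hd : IsWeakSquare v' y' z' v'') :
    (ShortComplex.mk (x ≫ u') (biprod.lift y' v')
        (by
          apply biprod.hom_ext
          · simp only [Category.assoc, biprod.lift_fst, zero_comp]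
            rw [hc0, comp_zero]
          · simp only [Category.assoc, biprod.lift_snd, zero_comp]
            rw [← Category.assoc, ← comm₁, Category.assoc, hb0, comp_zero])).Exact ∧
    (ShortComplex.mk (biprod.lift y' v') (biprod.desc v'' (-z'))
        (by simp [biprod.lift_desc, comm₂])).Exact := by
  obtain ⟨wa, hA⟩ := ha
  obtain ⟨wd, hD⟩ := hd
  constructor
  · rw [ShortComplex.exact_iff_exact_up_to_refinements]
    intro T t ht
    dsimp at ht ⊢
    have hty' : t ≫ y' = 0 := by
      have := ht =≫ biprod.fst; simpa using this
    have htv' : t ≫ v' = 0 := by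
      have := ht =≫ biprod.snd; simpa using this
    obtain ⟨T₁, π₁, hπ₁, c, hc1⟩ := hb.exact_up_to_refinements t htv'
    obtain ⟨T₂, π₂, hπ₂, b, hb1⟩ := hc.exact_up_to_refinements (π₁ ≫ t)
      (by rw [Category.assoc, hty', comp_zero])
    dsimp at hc1 hb1
    obtain ⟨T₃, π₃, hπ₃, s, hs⟩ := hA.exact_up_to_refinements
      (biprod.lift (π₂ ≫ c) b) (by
        dsimp
        rw [biprod.lift_desc, Preadditive.comp_neg, Category.assoc, ← hc1,
          hb1, add_neg_cancel])
    dsimp at hs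
    have hsx : π₃ ≫ b = s ≫ x := by
      have := hs =≫ biprod.snd; simpa using this
    refine ⟨T₃, π₃ ≫ π₂ ≫ π₁, inferInstance, s, ?_⟩
    simp only [Category.assoc]
    rw [hb1, ← Category.assoc, hsx, Category.assoc]
  · rw [ShortComplex.exact_iff_exact_up_to_refinements]
    intro T t ht
    dsimp at ht ⊢
    have hcomp : t ≫ biprod.fst ≫ v'' = t ≫ biprod.snd ≫ z' := by
      have ht' : biprod.lift (t ≫ biprod.fst) (t ≫ biprod.snd) ≫
          biprod.desc v'' (-z') = 0 := by
        rw [show biprod.lift (t ≫ biprod.fst) (t ≫ biprod.snd) = t by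
          apply biprod.hom_ext <;> simp]
        exact ht
      rw [biprod.lift_desc] at ht'
      simp only [Preadditive.comp_neg, add_neg_eq_zero, Category.assoc] at ht'
      exact ht'
    obtain ⟨T₁, π₁, hπ₁, s, hs⟩ := hD.exact_up_to_refinements
      (biprod.lift (t ≫ biprod.snd) (t ≫ biprod.fst)) (by
        dsimp
        rw [biprod.lift_desc, Preadditive.comp_neg, Category.assoc,
          Category.assoc, ← hcomp, add_neg_cancel])
    dsimp at hs
    have h1 : π₁ ≫ t ≫ biprod.snd = s ≫ v' := by
      have := hs =≫ biprod.fst; simpa using this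
    have h2 : π₁ ≫ t ≫ biprod.fst = s ≫ y' := by
      have := hs =≫ biprod.snd; simpa using this
    refine ⟨T₁, π₁, hπ₁, s, ?_⟩
    apply biprod.hom_ext
    · simpa using h2
    · simpa using h1
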